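/- Let ρ̃ : ℝ² × ℝ → ℝ, u : ℝ² × ℝ → ℝ² and F : ℝ² × ℝ → M₂(ℝ) be differentiable functions satisfying at every point the equations ∂ₜρ̃ + u·∇ρ̃ = 0 and ∂ₜF + u·∇F = (∇u)F. Define the effective tensor G := ρ̃ F Fᵀ − I, where I is the 2×2 identity matrix. Then at every point one has ∂ₜG + u·∇G + Q(∇u, G) = 2 D(u), where Q(∇u, G) := −(∇u)G − G(∇u)ᵀ and D(u) := (∇u + (∇u)ᵀ)/2. -/

import Mathlib

open Matrix

noncomputable section

/-- The plane `ℝ²`. -/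
abbrev E2 : Type := EuclideanSpace ℝ (Fin 2)

/-- `i`-th standard basis vector of `ℝ²`. -/
def e2 (i : Fin 2) : E2 := EuclideanSpace.single i (1 : ℝ)

/-- spatial partial derivative `∂ᵢ f` of a scalar function on `ℝ²`. -/
def pd (f : E2 → ℝ) (x : E2) (i : Fin 2) : ℝ := fderiv ℝ f x (e2 i)

/-- the spatial gradient matrix `(∇u)_{ij} = ∂_j u_i` of a (time-dependent) velocity
field `u`. -/
def gradM (u : E2 → ℝ → Fin 2 → ℝ) (x : E2) (t : ℝ) : Matrix (Fin 2) (Fin 2) ℝ :=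
  fun i j => pd (fun y => u y t i) x j

/-- `Q(A, G) = −AG − GAᵀ`. -/
def Qm (A G : Matrix (Fin 2) (Fin 2) ℝ) : Matrix (Fin 2) (Fin 2) ℝ := -(A * G) - G * Aᵀ

/-- `D(A) = (A + Aᵀ)/2`, the symmetric part. -/
def Dm (A : Matrix (Fin 2) (Fin 2) ℝ) : Matrix (Fin 2) (Fin 2) ℝ := (2 : ℝ)⁻¹ • (A + Aᵀ)

/-- The effective tensor `G := ρ̃FFᵀ − I`. -/
def Gm (ρ : E2 → ℝ → ℝ) (F : E2 → ℝ → Matrix (Fin 2) (Fin 2) ℝ) (x : E2) (t : ℝ) :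
    Matrix (Fin 2) (Fin 2) ℝ :=
  ρ x t • (F x t * (F x t)ᵀ) - 1

lemma diffAt_t {f : E2 × ℝ → ℝ} (hf : Differentiable ℝ f) (x : E2) (t : ℝ) :
    DifferentiableAt ℝ (fun s => f (x, s)) t :=
  (hf (x, t)).comp t ((differentiableAt_const x).prodMk differentiableAt_id)

lemma diffAt_x {f : E2 × ℝ → ℝ} (hf : Differentiable ℝ f) (x : E2) (t : ℝ) :
    DifferentiableAt ℝ (fun y => f (y, t)) x :=
  (hf (x, t)).comp x (differentiableAt_id.prodMk (differentiableAt_const t))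

lemma pd_mul {f g : E2 → ℝ} {x : E2} (hf : DifferentiableAt ℝ f x)
    (hg : DifferentiableAt ℝ g x) (i : Fin 2) :
    pd (fun y => f y * g y) x i = pd f x i * g x + f x * pd g x i := by
  simp only [pd, fderiv_fun_mul hf hg, ContinuousLinearMap.add_apply,
    ContinuousLinearMap.smul_apply, smul_eq_mul]
  ring

lemma pd_sum {n : ℕ} {f : Fin n → E2 → ℝ} {x : E2}
    (hf : ∀ m, DifferentiableAt ℝ (f m) x) (i : Fin 2) :
    pd (fun y => ∑ m, f m y) x i = ∑ m, pd (f m) x i := by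
  simp only [pd]
  rw [fderiv_fun_sum (fun m _ => hf m)]
  simp

def mder (u : E2 → ℝ → Fin 2 → ℝ) (f : E2 → ℝ → ℝ) (x : E2) (t : ℝ) : ℝ :=
  deriv (fun s => f x s) t + ∑ k, u x t k * pd (fun y => f y t) x k

lemma mder_sub_const (u : E2 → ℝ → Fin 2 → ℝ) (f : E2 → ℝ → ℝ) (c : ℝ) (x : E2) (t : ℝ) :
    mder u (fun y s => f y s - c) x t = mder u f x t := by
  unfold mder
  congr 1
  · exact deriv_sub_const c
  · refine Finset.sum_congr rfl fun k _ => ?_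
    congr 1
    simp [pd, fderiv_sub_const]

lemma mder_mul (u : E2 → ℝ → Fin 2 → ℝ) (f g : E2 → ℝ → ℝ) (x : E2) (t : ℝ)
    (hf1 : DifferentiableAt ℝ (fun s => f x s) t)
    (hf2 : DifferentiableAt ℝ (fun y => f y t) x)
    (hg1 : DifferentiableAt ℝ (fun s => g x s) t)
    (hg2 : DifferentiableAt ℝ (fun y => g y t) x) :
    mder u (fun y s => f y s * g y s) x t = mder u f x t * g x t + f x t * mder u g x t := by
  unfold mder
  rw [deriv_fun_mul hf1 hg1]
  have h : ∀ k : Fin 2, pd (fun y => f y t * g y t) x k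
      = pd (fun y => f y t) x k * g x t + f x t * pd (fun y => g y t) x k :=
    fun k => pd_mul hf2 hg2 k
  simp only [h, mul_add, Finset.sum_add_distrib]
  have e1 : ∑ k : Fin 2, u x t k * (pd (fun y => f y t) x k * g x t)
      = (∑ k : Fin 2, u x t k * pd (fun y => f y t) x k) * g x t := by
    rw [Finset.sum_mul]; exact Finset.sum_congr rfl fun k _ => by ring
  have e2 : ∑ k : Fin 2, u x t k * (f x t * pd (fun y => g y t) x k)
      = f x t * ∑ k : Fin 2, u x t k * pd (fun y => g y t) x k := by
    rw [Finset.mul_sum]; exact Finset.sum_congr rfl fun k _ => by ring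
  rw [e1, e2]; ring

lemma mder_sum {n : ℕ} (u : E2 → ℝ → Fin 2 → ℝ) (f : Fin n → E2 → ℝ → ℝ) (x : E2) (t : ℝ)
    (hf1 : ∀ m, DifferentiableAt ℝ (fun s => f m x s) t)
    (hf2 : ∀ m, DifferentiableAt ℝ (fun y => f m y t) x) :
    mder u (fun y s => ∑ m, f m y s) x t = ∑ m, mder u (f m) x t := by
  unfold mder
  rw [deriv_fun_sum (fun m _ => hf1 m)]
  have h : ∀ k : Fin 2, pd (fun y => ∑ m, f m y t) x k = ∑ m, pd (fun y => f m y t) x k :=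
    fun k => pd_sum hf2 k
  simp only [h, Finset.mul_sum, Finset.sum_add_distrib]
  rw [Finset.sum_comm]


/-- If `∂ₜρ̃ + u·∇ρ̃ = 0` and `∂ₜF + u·∇F = (∇u)F`, then the effective tensor
`G = ρ̃FFᵀ − I` satisfies `∂ₜG + u·∇G + Q(∇u, G) = 2D(u)` (entrywise, at every point). -/
theorem stmt1
    (ρ : E2 → ℝ → ℝ) (u : E2 → ℝ → Fin 2 → ℝ) (F : E2 → ℝ → Matrix (Fin 2) (Fin 2) ℝ)
    (hρ : Differentiable ℝ (fun q : E2 × ℝ => ρ q.1 q.2))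
    (hu : ∀ i, Differentiable ℝ (fun q : E2 × ℝ => u q.1 q.2 i))
    (hF : ∀ i j, Differentiable ℝ (fun q : E2 × ℝ => F q.1 q.2 i j))
    (hρeq : ∀ x t, deriv (fun s => ρ x s) t + ∑ k, u x t k * pd (fun y => ρ y t) x k = 0)
    (hFeq : ∀ x t i j,
      deriv (fun s => F x s i j) t + ∑ k, u x t k * pd (fun y => F y t i j) x k
        = (gradM u x t * F x t) i j) :
    ∀ x t i j,
      deriv (fun s => Gm ρ F x s i j) t
        + ∑ k, u x t k * pd (fun y => Gm ρ F y t i j) x k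
        + Qm (gradM u x t) (Gm ρ F x t) i j
      = ((2 : ℝ) • Dm (gradM u x t)) i j := by
  intro x t i j
  have hFt : ∀ a b, DifferentiableAt ℝ (fun s => F x s a b) t := fun a b => diffAt_t (hF a b) x t
  have hFx : ∀ a b, DifferentiableAt ℝ (fun y => F y t a b) x := fun a b => diffAt_x (hF a b) x t
  have hρt : DifferentiableAt ℝ (fun s => ρ x s) t := diffAt_t hρ x t
  have hρx : DifferentiableAt ℝ (fun y => ρ y t) x := diffAt_x hρ x t
  have hGfun : (fun (y : E2) (s : ℝ) => Gm ρ F y s i j)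
      = fun y s => (ρ y s * ∑ m, F y s i m * F y s j m)
          - (1 : Matrix (Fin 2) (Fin 2) ℝ) i j := by
    funext y s
    simp [Gm, Matrix.sub_apply, Matrix.smul_apply, Matrix.mul_apply, Matrix.transpose_apply,
      smul_eq_mul, Finset.mul_sum]
  have hSt : DifferentiableAt ℝ (fun s => ∑ m, F x s i m * F x s j m) t :=
    DifferentiableAt.fun_sum fun m _ => (hFt i m).mul (hFt j m)
  have hSx : DifferentiableAt ℝ (fun y => ∑ m, F y t i m * F y t j m) x :=
    DifferentiableAt.fun_sum fun m _ => (hFx i m).mul (hFx j m)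
  have hρmder : mder u ρ x t = 0 := hρeq x t
  have hFmder : ∀ a b, mder u (fun y s => F y s a b) x t = (gradM u x t * F x t) a b :=
    fun a b => hFeq x t a b
  have key : mder u (fun y s => Gm ρ F y s i j) x t
      = ρ x t * ∑ m, ((gradM u x t * F x t) i m * F x t j m
          + F x t i m * (gradM u x t * F x t) j m) := by
    rw [hGfun, mder_sub_const, mder_mul u ρ (fun y s => ∑ m, F y s i m * F y s j m) x t
      hρt hρx hSt hSx, hρmder, zero_mul, zero_add]
    congr 1
    rw [mder_sum u (fun m y s => F y s i m * F y s j m) x t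
      (fun m => (hFt i m).mul (hFt j m)) (fun m => (hFx i m).mul (hFx j m))]
    refine Finset.sum_congr rfl fun m _ => ?_
    rw [mder_mul u (fun y s => F y s i m) (fun y s => F y s j m) x t
      (hFt i m) (hFx i m) (hFt j m) (hFx j m), hFmder, hFmder]
  show mder u (fun y s => Gm ρ F y s i j) x t + Qm (gradM u x t) (Gm ρ F x t) i j
      = ((2 : ℝ) • Dm (gradM u x t)) i j
  rw [key]
  set A := gradM u x t
  set Fx := F x t
  simp only [Qm, Dm, Gm, Matrix.sub_apply, Matrix.neg_apply, Matrix.smul_apply,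
    Matrix.add_apply, Matrix.mul_apply, Matrix.transpose_apply, Matrix.one_apply,
    smul_eq_mul, Fin.sum_univ_two]
  fin_cases i <;> fin_cases j <;> simp <;> ring
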